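/- arXiv:2502.08840 — 2 statements merged into one kernel-verified Lean document; each statement's English description precedes it below -/
import Mathlib

section
/- Let G be a graph and let C₁, …, C_m be the 2-connected components of the clique hypergraph Cli(G) (with respect to the relation that two hyperedges are 2-adjacent if they share at least 2 vertices). If Proj(Cli(G)) = G, then a d-uniform hypergraph H satisfies Proj(H) = G if and only if H = H₁ ∪ ⋯ ∪ H_m where each Hᵢ ⊆ Cᵢ and Proj(Hᵢ) = Proj(Cᵢ). -/
/-- The projection of a hypergraph (given as a set of hyperedges). -/
def proj {V : Type*} (H : Set (Finset V)) : SimpleGraph V where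
  Adj i j := i ≠ j ∧ ∃ h ∈ H, i ∈ h ∧ j ∈ h
  symm := by constructor; rintro i j ⟨hij, h, hH, hi, hj⟩; exact ⟨hij.symm, h, hH, hj, hi⟩
  loopless := by constructor; rintro i ⟨hii, -⟩; exact hii rfl

/-- The clique hypergraph of `G`: all `d`-subsets forming cliques in `G`. -/
def cli {V : Type*} (G : SimpleGraph V) (d : ℕ) : Set (Finset V) :=
  {h | h.card = d ∧ ∀ i ∈ h, ∀ j ∈ h, i ≠ j → G.Adj i j}

/-- Two hyperedges of `K` are 2-adjacent if they share at least two vertices. -/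
def twoAdj {V : Type*} [DecidableEq V] (K : Set (Finset V)) (a b : Finset V) : Prop :=
  a ∈ K ∧ b ∈ K ∧ 2 ≤ (a ∩ b).card

/-- The 2-connected component of a hyperedge `h` in the hypergraph `K`. -/
def component {V : Type*} [DecidableEq V] (K : Set (Finset V)) (h : Finset V) :
    Set (Finset V) :=
  {h' ∈ K | Relation.ReflTransGen (twoAdj K) h h'}

/-- The set of 2-connected components of the hypergraph `K`. -/
def comps {V : Type*} [DecidableEq V] (K : Set (Finset V)) : Set (Set (Finset V)) :=
  {C | ∃ h ∈ K, C = component K h}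

/-- Decomposition of preimages across 2-connected components of the clique hypergraph:
assuming `Proj(Cli(G)) = G`, a `d`-uniform hypergraph `H` projects to `G` iff it is a union
`⋃ᵢ Hᵢ` with `Hᵢ ⊆ Cᵢ` and `Proj(Hᵢ) = Proj(Cᵢ)` over the 2-connected components `Cᵢ` of
`Cli(G)`. -/
theorem preimage_decomposition {V : Type*} [DecidableEq V] (d : ℕ) (G : SimpleGraph V)
    (hG : proj (cli G d) = G) (H : Set (Finset V)) (hU : ∀ h ∈ H, h.card = d) :
    proj H = G ↔
      ∃ f : Set (Finset V) → Set (Finset V),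
        (∀ C ∈ comps (cli G d), f C ⊆ C ∧ proj (f C) = proj C) ∧
        H = ⋃ C ∈ comps (cli G d), f C := by
  set K := cli G d with hK
  constructor
  · intro hPH
    have hHK : H ⊆ K := by
      intro h hh
      refine ⟨hU h hh, fun i hi j hj hij => ?_⟩
      rw [← hPH]; exact ⟨hij, h, hh, hi, hj⟩
    refine ⟨fun C => H ∩ C, fun C hC => ⟨Set.inter_subset_right, ?_⟩, ?_⟩
    · obtain ⟨h₀, hh₀, rfl⟩ := hC
      ext i j
      constructor
      · rintro ⟨hij, h, ⟨hhH, hhC⟩, hi, hj⟩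
        exact ⟨hij, h, hhC, hi, hj⟩
      · rintro ⟨hij, k, hkC, hi, hj⟩
        have hkK : k ∈ K := hkC.1
        have hadj : G.Adj i j := hkK.2 i hi j hj hij
        rw [← hPH] at hadj
        obtain ⟨-, h, hhH, hi', hj'⟩ := hadj
        have hstep : twoAdj K k h := by
          refine ⟨hkK, hHK hhH, ?_⟩
          have : 1 < (k ∩ h).card := Finset.one_lt_card.mpr
            ⟨i, Finset.mem_inter.mpr ⟨hi, hi'⟩, j, Finset.mem_inter.mpr ⟨hj, hj'⟩, hij⟩
          omega
        exact ⟨hij, h, ⟨hhH, hHK hhH, hkC.2.tail hstep⟩, hi', hj'⟩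
    · ext h
      simp only [Set.mem_iUnion, Set.mem_inter_iff]
      constructor
      · intro hh
        exact ⟨component K h, ⟨h, hHK hh, rfl⟩, hh, hHK hh, Relation.ReflTransGen.refl⟩
      · rintro ⟨C, hC, hh, -⟩
        exact hh
  · rintro ⟨f, hf, rfl⟩
    ext i j
    rw [← hG]
    constructor
    · rintro ⟨hij, h, hh, hi, hj⟩
      simp only [Set.mem_iUnion] at hh
      obtain ⟨C, hC, hhC⟩ := hh
      have hmem : h ∈ C := (hf C hC).1 hhC
      obtain ⟨h₀, hh₀, rfl⟩ := hC
      exact ⟨hij, h, hmem.1, hi, hj⟩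
    · rintro ⟨hij, h, hhK, hi, hj⟩
      have hC : component K h ∈ comps K := ⟨h, hhK, rfl⟩
      have hadj : (proj (component K h)).Adj i j :=
        ⟨hij, h, ⟨hhK, Relation.ReflTransGen.refl⟩, hi, hj⟩
      rw [← (hf _ hC).2] at hadj
      obtain ⟨-, h', hh', hi', hj'⟩ := hadj
      exact ⟨hij, h', Set.mem_iUnion₂.mpr ⟨_, hC, hh'⟩, hi', hj'⟩
end

section
/- Let H_b be the d-uniform hypergraph consisting of the hyperedge {v₁,…,v_d} together with, for each pair {i,j} ⊆ [d], a hyperedge {v_i, v_j, u_{ij}^{(1)}, …, u_{ij}^{(d−2)}} where all u-vertices are distinct new vertices. Then H_b has C(d,2)+1 hyperedges, d + C(d,2)(d−2) vertices, and m(H_b) = e_{H_b}/v_{H_b} = (C(d,2)+1)/(d + C(d,2)(d−2)); that is, the edge-to-vertex ratio of H_b itself attains the maximum over all its sub-hypergraphs. -/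
/-- Vertex type for the hypergraph `H_b`: the `d` core vertices `v₁,…,v_d` plus, for each
pair `p` of core vertices, `d-2` private vertices. -/
abbrev Vb (d : ℕ) := Fin d ⊕ (Finset (Fin d) × Fin (d - 2))

/-- The hyperedge associated to a pair `p = {i,j}`: it contains `v_i, v_j` together with
the `d-2` private vertices `u_{ij}^{(1)},…,u_{ij}^{(d-2)}`. -/
def hEdge (d : ℕ) (p : Finset (Fin d)) : Finset (Vb d) :=
  p.image Sum.inl ∪ Finset.univ.image (fun k : Fin (d - 2) => Sum.inr (p, k))

/-- The hypergraph `H_b`: the hyperedge `{v₁,…,v_d}` together with a hyperedge for each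
pair `{i,j} ⊆ [d]`. -/
def Hb (d : ℕ) : Finset (Finset (Vb d)) :=
  insert (Finset.univ.image Sum.inl)
    ((Finset.univ.powersetCard 2).image (hEdge d))

lemma mem_hEdge_inl {d : ℕ} {p : Finset (Fin d)} {i : Fin d} :
    (Sum.inl i : Vb d) ∈ hEdge d p ↔ i ∈ p := by simp [hEdge]

lemma mem_hEdge_inr {d : ℕ} {p q : Finset (Fin d)} {k : Fin (d-2)} :
    (Sum.inr (q, k) : Vb d) ∈ hEdge d p ↔ q = p := by
  simp [hEdge, Prod.ext_iff, eq_comm]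

lemma hEdge_card {d : ℕ} (hd : 3 ≤ d) {p : Finset (Fin d)} (hp : p.card = 2) :
    (hEdge d p).card = d := by
  rw [hEdge, Finset.card_union_of_disjoint (by simp [Finset.disjoint_left]),
    Finset.card_image_of_injective _ Sum.inl_injective,
    Finset.card_image_of_injective _ (fun a b h => by simpa using h),
    Finset.card_univ, Fintype.card_fin, hp]
  omega

lemma hEdge_injective {d : ℕ} (hd : 3 ≤ d) : Function.Injective (hEdge d) := by
  intro p q h
  have k0 : Fin (d - 2) := ⟨0, by omega⟩
  have h1 : (Sum.inr (p, k0) : Vb d) ∈ hEdge d p := mem_hEdge_inr.mpr rfl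
  rw [h] at h1
  exact mem_hEdge_inr.mp h1

lemma E0_ne_hEdge {d : ℕ} (hd : 3 ≤ d) (p : Finset (Fin d)) :
    (Finset.univ.image Sum.inl : Finset (Vb d)) ≠ hEdge d p := by
  intro h
  have k0 : Fin (d - 2) := ⟨0, by omega⟩
  have h1 : (Sum.inr (p, k0) : Vb d) ∈ hEdge d p := mem_hEdge_inr.mpr rfl
  rw [← h] at h1
  simp at h1

lemma sup_image_hEdge {d : ℕ} (S : Finset (Finset (Fin d))) :
    (S.image (hEdge d)).sup id =
      (S.sup id).image Sum.inl ∪ (S ×ˢ (Finset.univ : Finset (Fin (d-2)))).image Sum.inr := by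
  ext x
  cases x with
  | inl i => simp [Finset.mem_sup, mem_hEdge_inl]
  | inr z =>
    obtain ⟨q, k⟩ := z
    simp [Finset.mem_sup, mem_hEdge_inr]

lemma sup_insert_form {d : ℕ} (S : Finset (Finset (Fin d))) :
    ((insert (Finset.univ.image Sum.inl) (S.image (hEdge d))).sup id) =
      (Finset.univ.image Sum.inl : Finset (Vb d)) ∪
        (S ×ˢ (Finset.univ : Finset (Fin (d-2)))).image Sum.inr := by
  rw [Finset.sup_insert, sup_image_hEdge, id_eq, Finset.sup_eq_union, ← Finset.union_assoc,
    Finset.union_eq_left.mpr (Finset.image_subset_image (Finset.subset_univ _))]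

lemma card_form {d : ℕ} (A : Finset (Fin d)) (S : Finset (Finset (Fin d))) :
    ((A.image Sum.inl : Finset (Vb d)) ∪
      (S ×ˢ (Finset.univ : Finset (Fin (d-2)))).image Sum.inr).card
      = A.card + S.card * (d - 2) := by
  rw [Finset.card_union_of_disjoint (by simp [Finset.disjoint_left]),
    Finset.card_image_of_injective _ Sum.inl_injective,
    Finset.card_image_of_injective _ Sum.inr_injective,
    Finset.card_product, Finset.card_univ, Fintype.card_fin]

set_option maxHeartbeats 1000000 in
/-- `H_b` is `d`-uniform, has `C(d,2)+1` hyperedges and `d + C(d,2)(d-2)` vertices, and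
its edge-to-vertex ratio attains the maximum `m(H_b)` over all nonempty
sub-hypergraphs. -/
theorem Hb_counts_and_density (d : ℕ) (hd : 3 ≤ d) :
    (∀ h ∈ Hb d, h.card = d) ∧
    (Hb d).card = d.choose 2 + 1 ∧
    ((Hb d).sup id).card = d + d.choose 2 * (d - 2) ∧
    (∀ K' ⊆ Hb d, K'.Nonempty →
      (K'.card : ℚ) / ((K'.sup id).card : ℚ)
        ≤ ((Hb d).card : ℚ) / (((Hb d).sup id).card : ℚ)) := by
  have hd2 : 2 ≤ d := by omega
  have hCP2 : (Finset.univ.powersetCard 2 : Finset (Finset (Fin d))).card = d.choose 2 := by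
    rw [Finset.card_powersetCard, Finset.card_univ, Fintype.card_fin]
  have hnotmem : ∀ S : Finset (Finset (Fin d)),
      (Finset.univ.image Sum.inl : Finset (Vb d)) ∉ S.image (hEdge d) := by
    intro S hS
    obtain ⟨p, _, hp⟩ := Finset.mem_image.mp hS
    exact E0_ne_hEdge hd p hp.symm
  have hHbcard : (Hb d).card = d.choose 2 + 1 := by
    rw [Hb, Finset.card_insert_of_notMem (hnotmem _),
      Finset.card_image_of_injective _ (hEdge_injective hd), hCP2]
  have hHbsup : ((Hb d).sup id).card = d + d.choose 2 * (d - 2) := by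
    rw [Hb, sup_insert_form, card_form, Finset.card_univ, Fintype.card_fin, hCP2]
  refine ⟨?_, hHbcard, hHbsup, ?_⟩
  · intro h hh
    rw [Hb, Finset.mem_insert] at hh
    rcases hh with rfl | hh
    · rw [Finset.card_image_of_injective _ Sum.inl_injective, Finset.card_univ, Fintype.card_fin]
    · obtain ⟨p, hp, rfl⟩ := Finset.mem_image.mp hh
      rw [Finset.mem_powersetCard] at hp
      exact hEdge_card hd hp.2
  · intro K' hK' hne
    classical
    set S : Finset (Finset (Fin d)) :=
      (Finset.univ.powersetCard 2).filter (fun p => hEdge d p ∈ K') with hSdef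
    have hSle : S.card ≤ d.choose 2 :=
      hCP2 ▸ Finset.card_le_card (Finset.filter_subset _ _)
    have hmemform : ∀ x ∈ K', x ≠ (Finset.univ.image Sum.inl : Finset (Vb d)) →
        x ∈ S.image (hEdge d) := by
      intro x hx hxne
      have hx' := hK' hx
      rw [Hb, Finset.mem_insert] at hx'
      rcases hx' with rfl | hx'
      · exact absurd rfl hxne
      · obtain ⟨p, hp, rfl⟩ := Finset.mem_image.mp hx'
        exact Finset.mem_image_of_mem _ (Finset.mem_filter.mpr ⟨hp, hx⟩)
    have himgsub : S.image (hEdge d) ⊆ K' := by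
      intro x hx
      obtain ⟨p, hp, rfl⟩ := Finset.mem_image.mp hx
      exact (Finset.mem_filter.mp hp).2
    -- casts
    have hdQ : (3 : ℚ) ≤ (d : ℚ) := by exact_mod_cast hd
    have hsQ : (S.card : ℚ) ≤ (d.choose 2 : ℚ) := by exact_mod_cast hSle
    have hcast2 : ((d - 2 : ℕ) : ℚ) = (d : ℚ) - 2 := by
      push_cast [Nat.cast_sub hd2]; ring
    rw [hHbcard, hHbsup]
    by_cases hE0 : (Finset.univ.image Sum.inl : Finset (Vb d)) ∈ K'
    · have hK'eq : K' = insert (Finset.univ.image Sum.inl) (S.image (hEdge d)) := by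
        apply Finset.Subset.antisymm
        · intro x hx
          by_cases hxe : x = (Finset.univ.image Sum.inl : Finset (Vb d))
          · simp [hxe]
          · exact Finset.mem_insert_of_mem (hmemform x hx hxe)
        · intro x hx
          rcases Finset.mem_insert.mp hx with rfl | hx
          · exact hE0
          · exact himgsub hx
      rw [hK'eq, Finset.card_insert_of_notMem (hnotmem _),
        Finset.card_image_of_injective _ (hEdge_injective hd),
        sup_insert_form, card_form, Finset.card_univ, Fintype.card_fin]
      rw [div_le_div_iff₀ (Nat.cast_pos.mpr (by omega)) (Nat.cast_pos.mpr (by omega))]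
      push_cast [hcast2]
      nlinarith [hsQ, hdQ]
    · have hK'eq : K' = S.image (hEdge d) := by
        apply Finset.Subset.antisymm
        · intro x hx
          refine hmemform x hx ?_
          rintro rfl
          exact hE0 hx
        · exact himgsub
      have hSne : S.Nonempty := by
        rw [hK'eq] at hne
        exact Finset.image_nonempty.mp hne
      have hs1 : 1 ≤ S.card := Finset.card_pos.mpr hSne
      have ht2 : 2 ≤ (S.sup id).card := by
        obtain ⟨p, hp⟩ := hSne
        have hp2 : p.card = 2 :=
          (Finset.mem_powersetCard.mp (Finset.mem_filter.mp hp).1).2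
        calc 2 = p.card := hp2.symm
          _ ≤ (S.sup id).card := Finset.card_le_card (Finset.le_sup (f := id) hp)
      rw [hK'eq, Finset.card_image_of_injective _ (hEdge_injective hd),
        sup_image_hEdge, card_form]
      have hvpos : (0:ℚ) < ((S.sup id).card + S.card * (d - 2) : ℕ) := by
        have : 0 < (S.sup id).card + S.card * (d - 2) := by omega
        exact_mod_cast this
      rw [div_le_div_iff₀ hvpos (by positivity)]
      have hs1Q : (1 : ℚ) ≤ (S.card : ℚ) := by exact_mod_cast hs1
      have ht2Q : (2 : ℚ) ≤ ((S.sup id).card : ℚ) := by exact_mod_cast ht2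
      push_cast [hcast2]
      nlinarith [hsQ, hdQ, hs1Q, ht2Q,
        mul_le_mul_of_nonneg_left ht2Q (by positivity : (0:ℚ) ≤ (d.choose 2 : ℚ) + 1)]
end
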